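/- Let G be a connected graph, k a nonnegative integer, and S a minimal trivially perfect completion of G with |S| ≤ k; let H = G+S, and let L = (B, D) be a leaf block of the universal clique decomposition of H. If H is not a complete graph, then B = Ω₁ \ Ω₂ for some vital potential maximal cliques Ω₁, Ω₂ of (G,k), and D = B. -/

import Mathlib

open SimpleGraph

universe u

/-- A graph is *trivially perfect* if it has no induced subgraph isomorphic to `C₄` or `P₄`. -/
def TriviallyPerfect {V : Type u} (G : SimpleGraph V) : Prop :=
  IsEmpty (SimpleGraph.cycleGraph 4 ↪g G) ∧ IsEmpty (SimpleGraph.pathGraph 4 ↪g G)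

/-- A *universal clique decomposition* of a graph `G`: a finite rooted tree (modelled as a
finite partial order in which the set of elements above any element is a chain and which has
a top element, the root) together with a partition of the vertices into nonempty bags such that
adjacent vertices lie in comparable nodes, and each bag is exactly the set of universal
vertices of the subgraph induced by the union of the bags in the subtree below it. -/
structure UCD {V : Type u} (G : SimpleGraph V) : Type (u + 1) where
  ι : Type u
  [po : PartialOrder ι]
  [ot : OrderTop ι]
  [fin : Fintype ι]
  bag : ι → Set V
  bag_nonempty : ∀ t, (bag t).Nonempty
  bag_disjoint : ∀ s t, s ≠ t → Disjoint (bag s) (bag t)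
  bag_cover : ∀ v, ∃ t, v ∈ bag t
  up_chain : ∀ a b c : ι, a ≤ b → a ≤ c → b ≤ c ∨ c ≤ b
  adj_comparable : ∀ v w s t, G.Adj v w → v ∈ bag t → w ∈ bag s → s ≤ t ∨ t ≤ s
  bag_eq_universal : ∀ t, bag t =
    {v | (∃ s ≤ t, v ∈ bag s) ∧ ∀ w, (∃ s ≤ t, w ∈ bag s) → w ≠ v → G.Adj v w}

attribute [instance] UCD.po UCD.ot UCD.fin

namespace UCD

variable {V : Type u} {G : SimpleGraph V} (U : UCD G)

/-- `D_t`: the union of the bags in the subtree rooted at `t`. -/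
def subtreeSet (t : U.ι) : Set V := {v | ∃ s, s ≤ t ∧ v ∈ U.bag s}

/-- `Q_t`: the union of the bags on the path from `t` to the root. -/
def tailSet (t : U.ι) : Set V := {v | ∃ s, t ≤ s ∧ v ∈ U.bag s}

/-- `t` is a leaf of the decomposition tree. -/
def IsLeaf (t : U.ι) : Prop := ∀ s : U.ι, s ≤ t → s = t

end UCD

/-- `G + S`: the graph obtained from `G` by adding the pairs in `S` as edges. -/
def completes {V : Type u} (G : SimpleGraph V) (S : Set (Sym2 V)) : SimpleGraph V :=
  G ⊔ SimpleGraph.fromEdgeSet S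

/-- `S` is a set of non-edges of `G` (unordered pairs of distinct vertices, none an edge). -/
def IsCompletionSet {V : Type u} (G : SimpleGraph V) (S : Set (Sym2 V)) : Prop :=
  (∀ e ∈ S, ¬ e.IsDiag) ∧ Disjoint S G.edgeSet

/-- `S` is a minimal trivially perfect completion of `G`. -/
def IsMinTPCompletion {V : Type u} (G : SimpleGraph V) (S : Set (Sym2 V)) : Prop :=
  IsCompletionSet G S ∧ TriviallyPerfect (completes G S) ∧
    ∀ S' ⊂ S, ¬ TriviallyPerfect (completes G S')

/-- A vital potential maximal clique of `(G, k)`. -/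
def VitalPMC {V : Type u} (G : SimpleGraph V) (k : ℕ) (Ω : Set V) : Prop :=
  ∃ S, IsMinTPCompletion G S ∧ S.ncard ≤ k ∧ Maximal (completes G S).IsClique Ω


namespace UCD

variable {V : Type u} {G : SimpleGraph V} (U : UCD G)

lemma adj_of_bag_le {u s : U.ι} {w v : V} (hw : w ∈ U.bag u) (hs : s ≤ u)
    (hv : v ∈ U.bag s) (hvw : v ≠ w) : G.Adj v w := by
  rw [U.bag_eq_universal u] at hw
  exact (hw.2 v ⟨s, hs, hv⟩ hvw).symm

lemma tailSet_isClique (t : U.ι) : G.IsClique (U.tailSet t) := by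
  rintro v ⟨s, hts, hv⟩ w ⟨u, htu, hw⟩ hvw
  rcases U.up_chain t s u hts htu with h | h
  · exact U.adj_of_bag_le hw h hv hvw
  · exact (U.adj_of_bag_le hv h hw hvw.symm).symm

lemma bag_subset_tailSet (t : U.ι) : U.bag t ⊆ U.tailSet t :=
  fun v hv => ⟨t, le_refl t, hv⟩

lemma mem_tailSet_of_adj {t : U.ι} (hleaf : U.IsLeaf t) {v w : V}
    (hv : v ∈ U.bag t) (h : G.Adj v w) : w ∈ U.tailSet t := by
  obtain ⟨s, hw⟩ := U.bag_cover w
  rcases U.adj_comparable v w s t h hv hw with hst | hts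
  · exact ⟨t, le_refl t, (hleaf s hst) ▸ hw⟩
  · exact ⟨s, hts, hw⟩

lemma tailSet_maximal_clique {t : U.ι} (hleaf : U.IsLeaf t) :
    Maximal G.IsClique (U.tailSet t) := by
  refine ⟨U.tailSet_isClique t, fun C hC hsub x hx => ?_⟩
  obtain ⟨v, hv⟩ := U.bag_nonempty t
  by_cases hxv : x = v
  · exact hxv ▸ U.bag_subset_tailSet t hv
  · exact U.mem_tailSet_of_adj hleaf hv (hC (hsub (U.bag_subset_tailSet t hv)) hx (fun h => hxv h.symm))

/-- Any maximal clique meeting the bag of a leaf equals the tail set of that leaf. -/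
lemma eq_tailSet_of_maximal_meets {t : U.ι} (hleaf : U.IsLeaf t) {C : Set V}
    (hC : Maximal G.IsClique C) {v : V} (hvC : v ∈ C) (hv : v ∈ U.bag t) :
    C = U.tailSet t := by
  have hCsub : C ⊆ U.tailSet t := by
    intro x hx
    by_cases hxv : x = v
    · exact hxv ▸ U.bag_subset_tailSet t hv
    · exact U.mem_tailSet_of_adj hleaf hv (hC.1 hvC hx fun h => hxv h.symm)
  exact le_antisymm hCsub (hC.2 (U.tailSet_isClique t) hCsub)

end UCD

/-- Existence of a maximal clique containing a given clique, in a finite graph. -/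
lemma exists_maximal_clique {V : Type u} [Fintype V] (G : SimpleGraph V)
    {C : Set V} (hC : G.IsClique C) :
    ∃ D, Maximal G.IsClique D ∧ C ⊆ D := by
  have hfin : ({D : Set V | G.IsClique D ∧ C ⊆ D}).Finite := Set.toFinite _
  obtain ⟨D, hD, hmax⟩ := hfin.exists_maximalFor id _ ⟨C, hC, subset_refl C⟩
  refine ⟨D, ⟨hD.1, fun E hE hDE => ?_⟩, hD.2⟩
  exact hmax (j := E) ⟨hE, hD.2.trans hDE⟩ hDE

/-- Structure of a leaf block `(B, D)` of the universal clique decomposition of a minimal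
trivially perfect completion `H = G + S` with `|S| ≤ k`, when `H` is not complete:
`B = Ω₁ \ Ω₂` for vital potential maximal cliques `Ω₁`, `Ω₂`, and `D = B`. -/
theorem minTPCompletion_leaf_block_structure {V : Type u} [Fintype V]
    (G : SimpleGraph V) (hG : G.Connected) (k : ℕ)
    (S : Set (Sym2 V)) (hS : IsMinTPCompletion G S) (hcard : S.ncard ≤ k)
    (hne : completes G S ≠ ⊤)
    (U : UCD (completes G S)) (t : U.ι) (hleaf : U.IsLeaf t) :
    (∃ Ω₁ Ω₂ : Set V, VitalPMC G k Ω₁ ∧ VitalPMC G k Ω₂ ∧ U.bag t = Ω₁ \ Ω₂) ∧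
    U.subtreeSet t = U.bag t := by
  -- the subtree of a leaf is its bag
  have hsub : U.subtreeSet t = U.bag t := by
    ext v
    constructor
    · rintro ⟨s, hst, hv⟩; exact (hleaf s hst) ▸ hv
    · intro hv; exact ⟨t, le_refl t, hv⟩
  refine ⟨?_, hsub⟩
  -- t is not the root
  have htne : t ≠ (⊤ : U.ι) := by
    intro htop
    apply hne
    ext a b
    simp only [SimpleGraph.top_adj]
    refine ⟨fun h => h.ne, fun hab => ?_⟩
    obtain ⟨s, ha⟩ := U.bag_cover a
    obtain ⟨s', hb⟩ := U.bag_cover b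
    have hs : s = t := hleaf s (le_top.trans_eq htop.symm)
    have hs' : s' = t := hleaf s' (le_top.trans_eq htop.symm)
    exact U.adj_of_bag_le (hs' ▸ hb) (le_refl t) (hs ▸ ha) hab
  -- minimal element strictly above t
  have hchain : {u : U.ι | t < u}.Finite := Set.toFinite _
  obtain ⟨u₀, hu₀, hu₀min⟩ := hchain.exists_minimalFor id _
    ⟨⊤, lt_of_le_of_ne le_top htne⟩
  have hu₀le : ∀ u : U.ι, t < u → u₀ ≤ u := by
    intro u hu
    rcases U.up_chain t u₀ u hu₀.le hu.le with h | h
    · exact h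
    · exact hu₀min (j := u) hu h
  -- there is a vertex in D_{u₀} outside bag u₀ ∪ bag t
  have hvex : ∃ v, v ∈ U.subtreeSet u₀ ∧ v ∉ U.bag u₀ ∧ v ∉ U.bag t := by
    by_contra hcon
    push_neg at hcon
    obtain ⟨x, hx⟩ := U.bag_nonempty t
    have hxu : x ∈ U.bag u₀ := by
      rw [U.bag_eq_universal u₀]
      refine ⟨⟨t, hu₀.le, hx⟩, ?_⟩
      rintro w ⟨s, hsu, hw⟩ hwx
      rcases (em (w ∈ U.bag u₀)) with hwu | hwu
      · exact U.adj_of_bag_le hwu hu₀.le hx hwx.symm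
      · have hwt : w ∈ U.bag t := (hcon w ⟨s, hsu, hw⟩ hwu)
        exact U.adj_of_bag_le hwt (le_refl t) hx hwx.symm
    exact (U.bag_disjoint t u₀ hu₀.ne).ne_of_mem hx hxu rfl
  obtain ⟨v, ⟨w₀, hw₀u, hvw₀⟩, hvu₀, hvt⟩ := hvex
  -- v is not in the tail set of t
  have hvtail : v ∉ U.tailSet t := by
    rintro ⟨s, hts, hv⟩
    have hsw : s = w₀ := by
      by_contra hne'
      exact (U.bag_disjoint s w₀ hne').ne_of_mem hv hvw₀ rfl
    subst hsw
    rcases lt_or_eq_of_le hts with hlt | heq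
    · have := hu₀le s hlt
      have : s = u₀ := le_antisymm hw₀u this
      exact hvu₀ (this ▸ hv)
    · exact hvt (heq ▸ hv)
  -- K := (tailSet t \ bag t) ∪ {v} is a clique
  have hKclique : (completes G S).IsClique ((U.tailSet t \ U.bag t) ∪ {v}) := by
    rintro x hx y hy hxy
    rcases hx with hx | hx
    · rcases hy with hy | hy
      · exact U.tailSet_isClique t hx.1 hy.1 hxy
      · -- y = v ; x ∈ tailSet \ bag t
        rcases hx.1 with ⟨u, htu, hxu⟩
        have htu' : t < u := lt_of_le_of_ne htu (by
          rintro rfl; exact hx.2 hxu)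
        have h1 : u₀ ≤ u := hu₀le u htu'
        have : (completes G S).Adj v x := U.adj_of_bag_le hxu (hw₀u.trans h1) hvw₀ (by
          rintro rfl; exact hvtail hx.1)
        rw [Set.mem_singleton_iff] at hy
        exact hy ▸ this.symm
    · rw [Set.mem_singleton_iff] at hx
      rcases hy with hy | hy
      · rcases hy.1 with ⟨u, htu, hyu⟩
        have htu' : t < u := lt_of_le_of_ne htu (by
          rintro rfl; exact hy.2 hyu)
        have h1 : u₀ ≤ u := hu₀le u htu'
        exact hx ▸ U.adj_of_bag_le hyu (hw₀u.trans h1) hvw₀ (by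
          rintro h; rw [hx] at hxy; exact hxy h)
      · rw [Set.mem_singleton_iff] at hy
        exact absurd (hx.trans hy.symm) hxy
  obtain ⟨Ω₂, hΩ₂max, hKΩ₂⟩ := exists_maximal_clique (completes G S) hKclique
  -- Ω₂ misses bag t
  have hΩ₂bag : ∀ x ∈ U.bag t, x ∉ Ω₂ := by
    intro x hx hxΩ
    have := U.eq_tailSet_of_maximal_meets hleaf hΩ₂max hxΩ hx
    exact hvtail (this ▸ hKΩ₂ (Set.mem_union_right _ rfl))
  refine ⟨U.tailSet t, Ω₂, ⟨S, hS, hcard, U.tailSet_maximal_clique hleaf⟩,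
    ⟨S, hS, hcard, hΩ₂max⟩, ?_⟩
  ext x
  constructor
  · intro hx
    exact ⟨U.bag_subset_tailSet t hx, hΩ₂bag x hx⟩
  · rintro ⟨hx1, hx2⟩
    by_contra hxb
    exact hx2 (hKΩ₂ (Set.mem_union_left _ ⟨hx1, hxb⟩))
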